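/- Let G = (V,E) be a finite connected simple graph and s ∈ V, and let S be the BFS-layering tree decomposition of G with respect to s (the layering graph H with the bag of each layering class C of layer i ≥ 1 being C ∪ parent(C), and the bag of {s} being {s}). Then the length of S is at most 3·tl(G) + 1; that is, any two vertices lying in a common bag of S are at distance at most 3·tl(G) + 1 in G. -/

import Mathlib

open SimpleGraph

/-- A tree decomposition of a graph `G`, with decomposition tree indexed by `ι`. -/
structure TreeDecomp {V : Type} (G : SimpleGraph V) (ι : Type) : Type where
  /-- the decomposition tree -/
  tree : SimpleGraph ι
  /-- the decomposition tree is a tree -/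
  isTree : tree.IsTree
  /-- the bags -/
  bag : ι → Set V
  /-- every vertex of `G` belongs to some bag -/
  bag_cover : ∀ v : V, ∃ t, v ∈ bag t
  /-- both endpoints of every edge of `G` lie in a common bag -/
  bag_edge : ∀ ⦃u v : V⦄, G.Adj u v → ∃ t, u ∈ bag t ∧ v ∈ bag t
  /-- the nodes whose bag contains a given vertex induce a connected subtree -/
  bag_conn : ∀ v : V, (tree.induce {t | v ∈ bag t}).Connected

/-- `G` has a tree decomposition all of whose bags have diameter at most `ℓ` in `G`. -/
def HasTDLength {V : Type} (G : SimpleGraph V) (ℓ : ℕ) : Prop :=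
  ∃ (ι : Type) (td : TreeDecomp G ι), ∀ t, ∀ u ∈ td.bag t, ∀ v ∈ td.bag t, G.dist u v ≤ ℓ

/-- The tree-length of `G`: the minimum length over all tree decompositions of `G`. -/
noncomputable def treeLength {V : Type} (G : SimpleGraph V) : ℕ :=
  sInf {ℓ | HasTDLength G ℓ}

/-- `u` and `v` are layering-equivalent w.r.t. source `s`: they lie at the same
distance `i` from `s` and are joined by a path all of whose (intermediate)
vertices are at distance at least `i` from `s`. -/
def LayerEquiv {V : Type} (G : SimpleGraph V) (s u v : V) : Prop :=
  G.dist s u = G.dist s v ∧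
    ∃ p : G.Walk u v, p.IsPath ∧ ∀ w ∈ p.support, G.dist s u ≤ G.dist s w

/-- The layering class of the vertex `v` w.r.t. source `s`. -/
def layeringClassOf {V : Type} (G : SimpleGraph V) (s v : V) : Set V :=
  {u | LayerEquiv G s v u}

/-- `C` is a layering class of `G` w.r.t. source `s`. -/
def IsLayeringClass {V : Type} (G : SimpleGraph V) (s : V) (C : Set V) : Prop :=
  ∃ v, C = layeringClassOf G s v

/-- The layering graph `H`: vertices are the layering classes, two distinct
classes being adjacent iff `G` has an edge with one endpoint in each. -/
def layeringGraph {V : Type} (G : SimpleGraph V) (s : V) :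
    SimpleGraph {C : Set V // IsLayeringClass G s C} where
  Adj C D := C ≠ D ∧ ∃ u ∈ C.1, ∃ w ∈ D.1, G.Adj u w
  symm := by
    constructor
    rintro C D ⟨hne, u, hu, w, hw, h⟩
    exact ⟨hne.symm, w, hw, u, hu, h.symm⟩
  loopless := by constructor; rintro C ⟨hne, -⟩; exact hne rfl


namespace LayeringAux

variable {ι : Type} {T : SimpleGraph ι}

/-- Tripod lemma: given a path `p : t1 → t2` and a path `q : t2 → t3`, there is a
vertex `m` on both and a path `t1 → m → t3` using only vertices of `p` and `q`. -/
lemma tripod {t1 t2 : ι} (p : T.Walk t1 t2) :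
    ∀ {t3 : ι} (q : T.Walk t2 t3), p.IsPath → q.IsPath →
    ∃ (m : ι) (w1 : T.Walk t1 m) (w2 : T.Walk m t3),
      (w1.append w2).IsPath ∧ (∀ x ∈ w1.support, x ∈ p.support) ∧
      (∀ x ∈ w2.support, x ∈ q.support) ∧ m ∈ q.support := by
  classical
  induction p with
  | nil =>
    intro t3 q hp hq
    exact ⟨_, Walk.nil, q, by simpa using hq, by simp, fun x hx => hx, q.start_mem_support⟩
  | @cons a b c h p' ih =>
    intro t3 q hp hq
    by_cases ha : a ∈ q.support
    · refine ⟨a, Walk.nil, q.dropUntil a ha, ?_, by simp, ?_, ha⟩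
      · rw [Walk.nil_append]; exact hq.dropUntil ha
      · exact fun x hx => q.support_dropUntil_subset ha hx
    · obtain ⟨m, w1, w2, hw, hw1, hw2, hmq⟩ := ih q hp.of_cons hq
      refine ⟨m, Walk.cons h w1, w2, ?_, ?_, hw2, hmq⟩
      · rw [Walk.cons_append]
        refine hw.cons ?_
        rw [Walk.mem_support_append_iff]
        rintro (hx | hx)
        · exact ((Walk.cons_isPath_iff h p').mp hp).2 (hw1 a hx)
        · exact ha (hw2 a hx)
      · intro x hx
        rw [Walk.support_cons, List.mem_cons] at hx
        rcases hx with rfl | hx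
        · exact Walk.start_mem_support _
        · rw [Walk.support_cons]; exact List.mem_cons_of_mem _ (hw1 x hx)

lemma exists_path_support_subset {S : Set ι} (hS : (T.induce S).Connected)
    {a b : ι} (ha : a ∈ S) (hb : b ∈ S) :
    ∃ p : T.Walk a b, p.IsPath ∧ ∀ x ∈ p.support, x ∈ S := by
  classical
  obtain ⟨w⟩ := hS ⟨a, ha⟩ ⟨b, hb⟩
  let w' : T.Walk a b := w.map (SimpleGraph.Embedding.induce S).toHom
  refine ⟨w'.bypass, w'.bypass_isPath, fun x hx => ?_⟩
  have hx' := w'.support_bypass_subset hx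
  rw [show w'.support = _ from Walk.support_map (SimpleGraph.Embedding.induce S).toHom w] at hx'
  obtain ⟨⟨y, hy⟩, -, rfl⟩ := List.mem_map.mp hx'
  exact hy

/-- Helly property for three pairwise intersecting subtrees of a tree. -/
lemma helly3 (hT : T.IsTree) {S1 S2 S3 : Set ι}
    (h1 : (T.induce S1).Connected) (h2 : (T.induce S2).Connected)
    (h3 : (T.induce S3).Connected)
    {t12 t23 t13 : ι} (h12 : t12 ∈ S1 ∩ S2) (h23 : t23 ∈ S2 ∩ S3)
    (h13 : t13 ∈ S1 ∩ S3) :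
    ∃ m, m ∈ S1 ∧ m ∈ S2 ∧ m ∈ S3 := by
  obtain ⟨p, hp, hpS⟩ := exists_path_support_subset h2 h12.2 h23.1
  obtain ⟨q, hq, hqS⟩ := exists_path_support_subset h3 h23.2 h13.2
  obtain ⟨r, hr, hrS⟩ := exists_path_support_subset h1 h12.1 h13.1
  obtain ⟨m, w1, w2, hw, hw1, hw2, hmq⟩ := tripod p q hp hq
  have huniq : (⟨w1.append w2, hw⟩ : T.Path t12 t13) = ⟨r, hr⟩ :=
    isAcyclic_iff_path_unique.mp hT.IsAcyclic _ _
  have hmr : m ∈ r.support := by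
    have heq : w1.append w2 = r := congrArg Subtype.val huniq
    rw [← heq, Walk.mem_support_append_iff]
    exact Or.inl w1.end_mem_support
  exact ⟨m, hrS m hmr, hpS m (hw1 m w1.end_mem_support), hqS m hmq⟩



variable {V : Type} {G : SimpleGraph V}

/-- The set of nodes whose bag meets the support of a walk induces a connected
subtree of the decomposition tree. -/
lemma walkSet_conn {ι : Type} (td : TreeDecomp G ι) :
    ∀ {a b : V} (w : G.Walk a b),
      (td.tree.induce {t | ∃ x ∈ w.support, x ∈ td.bag t}).Connected := by
  intro x y w
  induction w with
  | nil =>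
    rename_i c
    have hset : {t | ∃ x ∈ (Walk.nil : G.Walk c c).support, x ∈ td.bag t}
        = {t | c ∈ td.bag t} := by ext t; simp
    rw [hset]; exact td.bag_conn c
  | @cons a b c h w' ih =>
    have hset : {t | ∃ x ∈ (Walk.cons h w').support, x ∈ td.bag t}
        = {t | a ∈ td.bag t} ∪ {t | ∃ x ∈ w'.support, x ∈ td.bag t} := by
      ext t
      simp only [Walk.support_cons, List.mem_cons, Set.mem_setOf_eq, Set.mem_union]
      constructor
      · rintro ⟨x, (rfl | hx), hxt⟩
        · exact Or.inl hxt
        · exact Or.inr ⟨x, hx, hxt⟩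
      · rintro (hat | ⟨x, hx, hxt⟩)
        · exact ⟨a, Or.inl rfl, hat⟩
        · exact ⟨x, Or.inr hx, hxt⟩
    rw [hset]
    obtain ⟨t, h1, h2⟩ := td.bag_edge h
    exact induce_union_connected (td.bag_conn a).preconnected ih.preconnected
      ⟨t, h1, ⟨b, w'.start_mem_support, h2⟩⟩

/-- a point on a walk splits the length. -/
lemma dist_add_dist_le_length {x y a : V} (q : G.Walk x y) (ha : a ∈ q.support) :
    G.dist x a + G.dist a y ≤ q.length := by
  classical
  calc G.dist x a + G.dist a y
      ≤ (q.takeUntil a ha).length + (q.dropUntil a ha).length :=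
        Nat.add_le_add (dist_le _) (dist_le _)
    _ = q.length := by rw [← Walk.length_append, q.take_spec ha]

/-- **Key lemma.** If `u` and `v` are joined by a walk all of whose vertices are at
distance at least `m` from `s`, then for any tree decomposition of length `ℓ`,
`dist u v + 2m ≤ dist s u + dist s v + 3ℓ`. -/
lemma key (hG : G.Connected) (s : V) {ℓ m : ℕ} (hℓ : HasTDLength G ℓ)
    {u v : V} (p : G.Walk u v) (hm : ∀ w ∈ p.support, m ≤ G.dist s w) :
    G.dist u v + 2 * m ≤ G.dist s u + G.dist s v + 3 * ℓ := by
  obtain ⟨ι, td, hbag⟩ := hℓ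
  obtain ⟨qu, hqu⟩ := hG.exists_walk_length_eq_dist s u
  obtain ⟨qv, hqv⟩ := hG.exists_walk_length_eq_dist s v
  have hS1 := walkSet_conn td qu
  have hS2 := walkSet_conn td p
  have hS3 := walkSet_conn td qv
  obtain ⟨tu, htu⟩ := td.bag_cover u
  obtain ⟨tv, htv⟩ := td.bag_cover v
  obtain ⟨ts, hts⟩ := td.bag_cover s
  obtain ⟨t, ht1, ht2, ht3⟩ := helly3 td.isTree hS1 hS2 hS3
    (t12 := tu) (t23 := tv) (t13 := ts)
    ⟨⟨u, qu.end_mem_support, htu⟩, ⟨u, p.start_mem_support, htu⟩⟩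
    ⟨⟨v, p.end_mem_support, htv⟩, ⟨v, qv.end_mem_support, htv⟩⟩
    ⟨⟨s, qu.start_mem_support, hts⟩, ⟨s, qv.start_mem_support, hts⟩⟩
  obtain ⟨a, haq, hab⟩ := ht1
  obtain ⟨c, hcp, hcb⟩ := ht2
  obtain ⟨b, hbq, hbb⟩ := ht3
  have dab : G.dist a b ≤ ℓ := hbag t a hab b hbb
  have dac : G.dist a c ≤ ℓ := hbag t a hab c hcb
  have dcb : G.dist c b ≤ ℓ := hbag t c hcb b hbb
  have hsplitu : G.dist s a + G.dist a u ≤ G.dist s u := by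
    rw [← hqu]; exact dist_add_dist_le_length qu haq
  have hsplitv : G.dist s b + G.dist b v ≤ G.dist s v := by
    rw [← hqv]; exact dist_add_dist_le_length qv hbq
  have hmc : m ≤ G.dist s c := hm c hcp
  have htr1 : G.dist s c ≤ G.dist s a + G.dist a c := hG.dist_triangle
  have htr2 : G.dist s c ≤ G.dist s b + G.dist b c := hG.dist_triangle
  have htr3 : G.dist u v ≤ G.dist u a + G.dist a v := hG.dist_triangle
  have htr4 : G.dist a v ≤ G.dist a b + G.dist b v := hG.dist_triangle
  have hc1 : G.dist u a = G.dist a u := dist_comm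
  have hc2 : G.dist b c = G.dist c b := dist_comm
  omega

/-- Every connected finite graph has a tree decomposition of length at most the
number of vertices: the trivial one-bag decomposition. -/
lemma hasTDLength_card [Fintype V] (hG : G.Connected) :
    HasTDLength G (Fintype.card V) := by
  classical
  have htree : (⊥ : SimpleGraph Unit).IsTree := by
    constructor
    · rw [connected_iff]
      exact ⟨fun a b => by rw [Subsingleton.elim a b], ⟨()⟩⟩
    · intro v c hc
      cases c with
      | nil => exact hc.ne_nil rfl
      | cons h _ => exact h.elim
  have hconn : ∀ v : V,
      ((⊥ : SimpleGraph Unit).induce {t | v ∈ (Set.univ : Set V)}).Connected := by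
    intro v
    rw [connected_iff]
    refine ⟨fun a b => by rw [Subsingleton.elim a b], ⟨⟨(), Set.mem_univ v⟩⟩⟩
  refine ⟨Unit,
    { tree := ⊥
      isTree := htree
      bag := fun _ => Set.univ
      bag_cover := fun v => ⟨(), Set.mem_univ v⟩
      bag_edge := fun u v _ => ⟨(), Set.mem_univ u, Set.mem_univ v⟩
      bag_conn := fun v => hconn v },
    fun t u _ v _ => ?_⟩
  obtain ⟨w⟩ := hG u v
  exact le_of_lt (lt_of_le_of_lt (dist_le w.bypass) w.bypass_isPath.length_lt)

/-- Two vertices of a common layering class are joined by a walk staying at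
distance at least `dist s u` from `s`, and are equidistant from `s`. -/
lemma class_walk (s v0 : V) {u v : V}
    (hu : u ∈ layeringClassOf G s v0) (hv : v ∈ layeringClassOf G s v0) :
    G.dist s u = G.dist s v ∧
      ∃ p : G.Walk u v, ∀ w ∈ p.support, G.dist s u ≤ G.dist s w := by
  obtain ⟨hdu, pu, -, hpu⟩ := hu
  obtain ⟨hdv, pv, -, hpv⟩ := hv
  refine ⟨hdu.symm.trans hdv, pu.reverse.append pv, fun w hw => ?_⟩
  rw [← hdu]
  rw [Walk.mem_support_append_iff] at hw
  rcases hw with hw | hw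
  · rw [Walk.support_reverse, List.mem_reverse] at hw
    exact hpu w hw
  · exact hpv w hw

end LayeringAux

/-- The length of the BFS-layering tree decomposition `S` of `G`
with respect to `s` is at most `3 · tl(G) + 1`: any two vertices lying in a common
bag of `S` are at distance at most `3 · tl(G) + 1` in `G`. -/
theorem layering_tree_decomposition_length {V : Type} [Fintype V]
    (G : SimpleGraph V) (hG : G.Connected) (s : V)
    (P : {C : Set V // IsLayeringClass G s C} → {C : Set V // IsLayeringClass G s C})
    (hP : ∀ C, s ∉ C.1 → (layeringGraph G s).Adj C (P C) ∧
      ∀ v ∈ C.1, ∀ w ∈ (P C).1, G.dist s w + 1 = G.dist s v)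
    (B : {C : Set V // IsLayeringClass G s C} → Set V)
    (hBroot : ∀ C, s ∈ C.1 → B C = {s})
    (hBne : ∀ C, s ∉ C.1 → B C = C.1 ∪ (P C).1) :
    ∀ C, ∀ u ∈ B C, ∀ v ∈ B C, G.dist u v ≤ 3 * treeLength G + 1 := by
  intro C u hu v hv
  have hne : {ℓ | HasTDLength G ℓ}.Nonempty :=
    ⟨Fintype.card V, LayeringAux.hasTDLength_card hG⟩
  have hmem : HasTDLength G (treeLength G) := Nat.sInf_mem hne
  set ℓ := treeLength G with hℓdef
  by_cases hs : s ∈ C.1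
  · rw [hBroot C hs, Set.mem_singleton_iff] at hu hv
    subst hu; subst hv
    simp [SimpleGraph.dist_self]
  · rw [hBne C hs] at hu hv
    obtain ⟨hadj, hdist⟩ := hP C hs
    obtain ⟨v0, hC⟩ := C.2
    obtain ⟨v1, hPC⟩ := (P C).2
    have same : ∀ (z0 x y : V), x ∈ layeringClassOf G s z0 →
        y ∈ layeringClassOf G s z0 → G.dist x y ≤ 3 * ℓ := by
      intro z0 x y hx hy
      obtain ⟨hd, p, hp⟩ := LayeringAux.class_walk s z0 hx hy
      have hkey := LayeringAux.key hG s hmem p hp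
      omega
    have mixed : ∀ x ∈ C.1, ∀ y ∈ (P C).1, G.dist x y ≤ 3 * ℓ + 1 := by
      intro x hx y hy
      obtain ⟨-, u', hu', w', hw', hadj'⟩ := hadj
      have hd_y : G.dist s y + 1 = G.dist s x := hdist x hx y hy
      have hd_w' : G.dist s w' + 1 = G.dist s x := hdist x hx w' hw'
      rw [hC] at hx hu'
      rw [hPC] at hw' hy
      obtain ⟨hd1, p1, hp1⟩ := LayeringAux.class_walk s v0 hx hu'
      obtain ⟨hd2, p2, hp2⟩ := LayeringAux.class_walk s v1 hw' hy
      have hkey := LayeringAux.key hG s hmem (m := G.dist s y)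
          (p1.append (Walk.cons hadj' p2)) ?_
      · omega
      · intro w hw
        rw [Walk.mem_support_append_iff] at hw
        rcases hw with hw | hw
        · have := hp1 w hw
          omega
        · rw [Walk.support_cons, List.mem_cons] at hw
          rcases hw with rfl | hw
          · omega
          · have := hp2 w hw
            omega
    rcases hu with hu | hu <;> rcases hv with hv | hv
    · rw [hC] at hu hv
      have := same v0 u v hu hv
      omega
    · exact mixed u hu v hv
    · rw [SimpleGraph.dist_comm]
      exact mixed v hv u hu
    · rw [hPC] at hu hv
      have := same v1 u v hu hv
      omega
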